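/- arXiv:2412.11893 — 3 statements merged into one kernel-verified Lean document; each statement's English description precedes it below -/
import Mathlib

section
/- Let A be an irreducible nonnegative real n×n matrix with spectral radius ρ, let f be a real polynomial, and let y be a nonzero nonnegative vector. If f(A)y ≤ ry entrywise for some real r, then f(ρ) ≤ r, with equality if and only if f(A)y = ry. Moreover, if (f(A)y)_i < r·y_i for some coordinate i, then f(ρ) < r. -/
open SimpleGraph

/-- `H` is a minor of `G`: there are nonempty pairwise-disjoint connected branch sets
in `G`, one for each vertex of `H`, with an edge of `G` between the branch sets of any
two adjacent vertices of `H`. -/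
def SimpleGraph.IsMinorOf {β V : Type*} (H : SimpleGraph β) (G : SimpleGraph V) : Prop :=
  ∃ f : β → Set V,
    (∀ b, (f b).Nonempty) ∧
    (Pairwise fun b₁ b₂ => Disjoint (f b₁) (f b₂)) ∧
    (∀ b, (G.induce (f b)).Connected) ∧
    (∀ b₁ b₂, H.Adj b₁ b₂ → ∃ a₁ ∈ f b₁, ∃ a₂ ∈ f b₂, G.Adj a₁ a₂)

/-- A graph is outerplanar iff it has no `K₄` minor and no `K_{2,3}` minor. -/
def SimpleGraph.Outerplanar {V : Type*} (G : SimpleGraph V) : Prop :=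
  ¬ (completeGraph (Fin 4)).IsMinorOf G ∧
  ¬ (completeBipartiteGraph (Fin 2) (Fin 3)).IsMinorOf G

/-- The graph obtained from `G` by adding the edge `uv`. -/
def SimpleGraph.addEdge {V : Type*} (G : SimpleGraph V) (u v : V) : SimpleGraph V :=
  G ⊔ SimpleGraph.fromEdgeSet {s(u, v)}

/-- An (edge-)maximal bipartite outerplanar graph: bipartite and outerplanar, and adding any
new edge between distinct non-adjacent vertices destroys outerplanarity or bipartiteness. -/
def SimpleGraph.MaxBipOuterplanar {V : Type*} (G : SimpleGraph V) : Prop :=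
  G.Outerplanar ∧ G.Colorable 2 ∧
    ∀ u v : V, u ≠ v → ¬ G.Adj u v →
      ¬ ((G.addEdge u v).Outerplanar ∧ (G.addEdge u v).Colorable 2)

/-- A graph on at least 3 vertices is 2-connected if it is connected and remains
connected after deleting any single vertex. -/
def SimpleGraph.TwoConnected {V : Type*} [Fintype V] (G : SimpleGraph V) : Prop :=
  3 ≤ Fintype.card V ∧ G.Connected ∧
    ∀ v : V, (((⊤ : G.Subgraph).deleteVerts {v}).coe).Connected

/-- The spectral radius of a graph: the largest (real) eigenvalue of its adjacency matrix. -/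
noncomputable def SimpleGraph.specRad {V : Type*} [Fintype V] (G : SimpleGraph V) : ℝ := by
  classical exact sSup (spectrum ℝ (G.adjMatrix ℝ))

/-- The least eigenvalue of a graph: the smallest (real) eigenvalue of its adjacency matrix. -/
noncomputable def SimpleGraph.leastEig {V : Type*} [Fintype V] (G : SimpleGraph V) : ℝ := by
  classical exact sInf (spectrum ℝ (G.adjMatrix ℝ))

/-- The star on `n` vertices: vertex `0` adjacent to all others. -/
def starGraph (n : ℕ) : SimpleGraph (Fin n) where
  Adj i j := i ≠ j ∧ (i.val = 0 ∨ j.val = 0)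
  symm := by constructor; intro i j h; exact ⟨h.1.symm, h.2.symm⟩
  loopless := by constructor; intro i h; exact h.1 rfl

/-- The spectral radius of a real square matrix: the supremum of the moduli of its
complex eigenvalues. -/
noncomputable def matSpecRad {n : ℕ} (A : Matrix (Fin n) (Fin n) ℝ) : ℝ :=
  sSup ((fun z : ℂ => ‖z‖) '' spectrum ℂ (A.map Complex.ofReal))

/-- Irreducibility of a nonnegative matrix: for all `i j` some power has positive `(i,j)` entry. -/
def MatIrreducible {n : ℕ} (A : Matrix (Fin n) (Fin n) ℝ) : Prop :=
  ∀ i j, ∃ k : ℕ, 0 < (A ^ k) i j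

/-- A combinatorial plane embedding of a (connected) graph `G`: a family of closed walks
(face boundaries) such that every edge of `G` lies on exactly two face sides, together
with Euler's formula. -/
structure PlaneEmbedding {V : Type*} [Fintype V] [DecidableEq V]
    (G : SimpleGraph V) [DecidableRel G.Adj] where
  numFaces : ℕ
  base : Fin numFaces → V
  boundary : (f : Fin numFaces) → G.Walk (base f) (base f)
  edge_twice : ∀ e ∈ G.edgeSet, (∑ f : Fin numFaces, ((boundary f).edges.count e)) = 2
  euler : (Fintype.card V : ℤ) + numFaces - G.edgeFinset.card = 2

/-- An outerplane embedding: a plane embedding with a distinguished (outer) face whose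
boundary passes through every vertex of `G`. -/
structure OuterplaneEmbedding {V : Type*} [Fintype V] [DecidableEq V]
    (G : SimpleGraph V) [DecidableRel G.Adj] extends PlaneEmbedding G where
  outer : Fin numFaces
  outer_all : ∀ v : V, v ∈ (boundary outer).support

open Matrix Finset Polynomial

section PFaux
variable {n : ℕ}
open Matrix Finset Polynomial

variable {n : ℕ}

lemma entry_pow_nonneg (A : Matrix (Fin n) (Fin n) ℝ) (hA : ∀ i j, 0 ≤ A i j) :
    ∀ (k : ℕ) (i j : Fin n), 0 ≤ (A ^ k) i j := by
  intro k
  induction k with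
  | zero => intro i j; simp [Matrix.one_apply]; split <;> norm_num
  | succ k ih =>
    intro i j
    rw [pow_succ, Matrix.mul_apply]
    exact Finset.sum_nonneg fun l _ => mul_nonneg (ih i l) (hA l j)

lemma mulVec_entry_nonneg (A : Matrix (Fin n) (Fin n) ℝ) (hA : ∀ i j, 0 ≤ A i j)
    (x : Fin n → ℝ) (hx : ∀ j, 0 ≤ x j) (i : Fin n) : 0 ≤ (A *ᵥ x) i := by
  simp only [Matrix.mulVec, dotProduct]
  exact Finset.sum_nonneg fun j _ => mul_nonneg (hA i j) (hx j)

lemma mulVec_entry_pos (A : Matrix (Fin n) (Fin n) ℝ) (hA : ∀ i j, 0 < A i j)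
    (x : Fin n → ℝ) (hx : ∀ j, 0 ≤ x j) (hxne : x ≠ 0) (i : Fin n) : 0 < (A *ᵥ x) i := by
  obtain ⟨j, hj⟩ : ∃ j, 0 < x j := by
    by_contra h
    push_neg at h
    exact hxne (funext fun j => le_antisymm (h j) (hx j))
  simp only [Matrix.mulVec, dotProduct]
  exact Finset.sum_pos' (fun l _ => mul_nonneg (hA i l).le (hx l))
    ⟨j, Finset.mem_univ j, mul_pos (hA i j) hj⟩

lemma continuous_mulVec_entry (A : Matrix (Fin n) (Fin n) ℝ) (i : Fin n) :
    Continuous fun x : Fin n → ℝ => (A *ᵥ x) i := by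
  simp only [Matrix.mulVec, dotProduct]
  exact continuous_finset_sum _ fun j _ => continuous_const.mul (continuous_apply j)

lemma continuousOn_inf' {ι X : Type*} [TopologicalSpace X] {s : Finset ι}
    (hs : s.Nonempty) {F : ι → X → ℝ} {t : Set X} (hF : ∀ i ∈ s, ContinuousOn (F i) t) :
    ContinuousOn (fun x => s.inf' hs fun i => F i x) t := by
  induction hs using Finset.Nonempty.cons_induction with
  | singleton i =>
    simp only [Finset.inf'_singleton]
    exact hF i (by simp)
  | cons i s his hs ih =>
    simp only [Finset.inf'_cons hs]
    exact (hF i (by simp)).inf (ih fun j hj => hF j (by simp [hj]))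

lemma perron_exists (hn : 0 < n) (M : Matrix (Fin n) (Fin n) ℝ)
    (hM : ∀ i j, 0 ≤ M i j) (hirr : ∀ i j, ∃ k : ℕ, 0 < (M ^ k) i j) :
    ∃ (lam : ℝ) (u : Fin n → ℝ), 0 ≤ lam ∧ (∀ i, 0 < u i) ∧ M *ᵥ u = lam • u := by
  classical
  haveI : Nonempty (Fin n) := ⟨⟨0, hn⟩⟩
  set K : ℕ := Finset.univ.sup (fun p : Fin n × Fin n => (hirr p.1 p.2).choose) with hK
  set C : Matrix (Fin n) (Fin n) ℝ := ∑ k ∈ Finset.range (K + 1), M ^ k with hC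
  have hCpos : ∀ i j, 0 < C i j := by
    intro i j
    have hmem : (hirr i j).choose ∈ Finset.range (K + 1) := by
      rw [Finset.mem_range, Nat.lt_succ_iff]
      exact Finset.le_sup (f := fun p : Fin n × Fin n => (hirr p.1 p.2).choose)
        (Finset.mem_univ (i, j))
    have hCij : C i j = ∑ k ∈ Finset.range (K + 1), (M ^ k) i j := by
      simp [hC, Matrix.sum_apply]
    rw [hCij]
    exact Finset.sum_pos' (fun k _ => entry_pow_nonneg M hM k i j)
      ⟨_, hmem, (hirr i j).choose_spec⟩
  have hcomm : C * M = M * C := by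
    rw [hC, Finset.sum_mul, Finset.mul_sum]
    exact Finset.sum_congr rfl fun k _ => by rw [← pow_succ, ← pow_succ']
  -- C maps nonneg nonzero vectors to positive vectors
  have hCmv : ∀ x : Fin n → ℝ, (∀ j, 0 ≤ x j) → x ≠ 0 → ∀ i, 0 < (C *ᵥ x) i :=
    fun x hx hxne i => mulVec_entry_pos C hCpos x hx hxne i
  -- the simplex
  set Δ : Set (Fin n → ℝ) := stdSimplex ℝ (Fin n) with hΔ
  have hΔmem : ∀ x ∈ Δ, (∀ j, 0 ≤ x j) ∧ x ≠ 0 := by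
    intro x hx
    refine ⟨hx.1, fun h0 => ?_⟩
    have := hx.2
    rw [h0] at this
    simp at this
  -- the Collatz-Wielandt function
  set g : (Fin n → ℝ) → ℝ :=
    fun x => Finset.univ.inf' Finset.univ_nonempty
      (fun i => (M *ᵥ (C *ᵥ x)) i / (C *ᵥ x) i) with hg
  have hgcont : ContinuousOn g Δ := by
    apply continuousOn_inf'
    intro i _
    apply ContinuousOn.div
    · exact ((continuous_mulVec_entry M i).comp
        (continuous_pi fun j => continuous_mulVec_entry C j)).continuousOn
    · exact (continuous_mulVec_entry C i).continuousOn
    · intro x hx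
      exact (hCmv x (hΔmem x hx).1 (hΔmem x hx).2 i).ne'
  have hΔne : Δ.Nonempty := ⟨fun _ => 1 / n, by
    constructor
    · intro i; positivity
    · simp
      field_simp⟩
  obtain ⟨x₀, hx₀, hmax⟩ := (isCompact_stdSimplex ℝ (Fin n)).exists_isMaxOn hΔne hgcont
  set u : Fin n → ℝ := C *ᵥ x₀ with hu
  have hupos : ∀ i, 0 < u i := hCmv x₀ (hΔmem x₀ hx₀).1 (hΔmem x₀ hx₀).2
  set lam : ℝ := g x₀ with hlam
  have hlam_le : ∀ i, lam * u i ≤ (M *ᵥ u) i := by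
    intro i
    have := Finset.inf'_le (fun i => (M *ᵥ u) i / u i) (Finset.mem_univ i)
    rw [hlam, hg] at *
    have h2 : lam ≤ (M *ᵥ u) i / u i := this
    calc lam * u i ≤ ((M *ᵥ u) i / u i) * u i := by
          exact mul_le_mul_of_nonneg_right h2 (hupos i).le
      _ = (M *ᵥ u) i := div_mul_cancel₀ _ (hupos i).ne'
  have hlam0 : 0 ≤ lam := by
    rw [hlam, hg, Finset.le_inf'_iff]
    intro i _
    exact div_nonneg (mulVec_entry_nonneg M hM u (fun j => (hupos j).le) i) (hupos i).le
  -- equality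
  refine ⟨lam, u, hlam0, hupos, ?_⟩
  by_contra hne
  set z : Fin n → ℝ := M *ᵥ u - lam • u with hz
  have hzne : z ≠ 0 := fun h => hne (by rwa [hz, sub_eq_zero] at h)
  have hz0 : ∀ i, 0 ≤ z i := fun i => by
    simpa [hz] using sub_nonneg.mpr (hlam_le i)
  -- w := C *ᵥ u ; M *ᵥ w - lam • w = C *ᵥ z > 0
  set w : Fin n → ℝ := C *ᵥ u with hw
  have hwpos : ∀ i, 0 < w i :=
    hCmv u (fun j => (hupos j).le) (fun h => (hupos ⟨0, hn⟩).ne' (congrFun h ⟨0, hn⟩)) 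
  have hswap : ∀ v : Fin n → ℝ, C *ᵥ (M *ᵥ v) = M *ᵥ (C *ᵥ v) := by
    intro v
    rw [Matrix.mulVec_mulVec, Matrix.mulVec_mulVec, hcomm]
  have key : M *ᵥ w - lam • w = C *ᵥ z := by
    rw [hz, Matrix.mulVec_sub, Matrix.mulVec_smul, hswap, hw]
  have hCz : ∀ i, 0 < (C *ᵥ z) i := hCmv z hz0 hzne
  -- iterate once more
  have key2 : M *ᵥ (C *ᵥ w) - lam • (C *ᵥ w) = C *ᵥ (C *ᵥ z) := by
    rw [← hswap, ← Matrix.mulVec_smul, ← Matrix.mulVec_sub, key]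
  have hCCz : ∀ i, 0 < (C *ᵥ (C *ᵥ z)) i :=
    hCmv _ (fun j => (hCz j).le) (fun h => (hCz ⟨0, hn⟩).ne' (congrFun h ⟨0, hn⟩))
  have hCw : ∀ i, 0 < (C *ᵥ w) i :=
    hCmv w (fun j => (hwpos j).le) (fun h => (hwpos ⟨0, hn⟩).ne' (congrFun h ⟨0, hn⟩))
  -- normalize w into the simplex
  set s : ℝ := ∑ i, w i with hs
  have hspos : 0 < s := Finset.sum_pos (fun i _ => hwpos i) Finset.univ_nonempty
  set x₁ : Fin n → ℝ := s⁻¹ • w with hx₁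
  have hx₁Δ : x₁ ∈ Δ := by
    constructor
    · intro i
      exact mul_nonneg (inv_nonneg.mpr hspos.le) (hwpos i).le
    · simp only [hx₁, Pi.smul_apply, smul_eq_mul, ← Finset.mul_sum, ← hs]
      exact inv_mul_cancel₀ hspos.ne'
  have hgx₁ : lam < g x₁ := by
    rw [hg, Finset.lt_inf'_iff]
    intro i _
    have hCx₁ : C *ᵥ x₁ = s⁻¹ • (C *ᵥ w) := by rw [hx₁, Matrix.mulVec_smul]
    rw [hCx₁, Matrix.mulVec_smul]
    simp only [Pi.smul_apply, smul_eq_mul]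
    rw [mul_div_mul_left _ _ (inv_ne_zero hspos.ne')]
    rw [lt_div_iff₀ (hCw i)]
    have := key2
    have h3 : lam * (C *ᵥ w) i < (M *ᵥ (C *ᵥ w)) i := by
      have := congrFun key2 i
      simp only [Pi.sub_apply, Pi.smul_apply, smul_eq_mul] at this
      have h4 := hCCz i
      linarith [this ▸ h4]
    linarith [h3]
  exact absurd (hmax hx₁Δ) (not_le.mpr hgx₁)

lemma eig_pow (M : Matrix (Fin n) (Fin n) ℝ) (u : Fin n → ℝ) (lam : ℝ)
    (h : M *ᵥ u = lam • u) (k : ℕ) : (M ^ k) *ᵥ u = (lam ^ k) • u := by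
  induction k with
  | zero => simp [Matrix.one_mulVec]
  | succ k ih =>
    rw [pow_succ', ← Matrix.mulVec_mulVec, ih, Matrix.mulVec_smul, h, smul_smul, pow_succ']
    ring_nf

lemma eig_aeval (M : Matrix (Fin n) (Fin n) ℝ) (u : Fin n → ℝ) (lam : ℝ)
    (h : M *ᵥ u = lam • u) (p : Polynomial ℝ) :
    (Polynomial.aeval M p) *ᵥ u = (p.eval lam) • u := by
  induction p using Polynomial.induction_on' with
  | add p q hp hq => rw [map_add, Matrix.add_mulVec, hp, hq, Polynomial.eval_add, add_smul]
  | monomial k c =>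
    rw [Polynomial.aeval_monomial, ← Algebra.smul_def, Matrix.smul_mulVec, eig_pow M u lam h,
      Polynomial.eval_monomial, smul_smul]

lemma aeval_transpose (A : Matrix (Fin n) (Fin n) ℝ) (p : Polynomial ℝ) :
    (Polynomial.aeval A p)ᵀ = Polynomial.aeval Aᵀ p := by
  induction p using Polynomial.induction_on' with
  | add p q hp hq => rw [map_add, Matrix.transpose_add, hp, hq, map_add]
  | monomial k c =>
    rw [Polynomial.aeval_monomial, ← Algebra.smul_def, Matrix.transpose_smul, Matrix.transpose_pow,
      Polynomial.aeval_monomial, ← Algebra.smul_def]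


lemma abs_le_lam (hn : 0 < n) (A : Matrix (Fin n) (Fin n) ℝ) (lam : ℝ) (u : Fin n → ℝ)
    (hA : ∀ i j, 0 ≤ A i j) (hu : ∀ i, 0 < u i)
    (heig : Aᵀ *ᵥ u = lam • u) :
    ∀ μ ∈ spectrum ℂ (A.map Complex.ofReal), ‖μ‖ ≤ lam := by
  intro μ hμ
  rw [spectrum.mem_iff] at hμ
  have hdet : ((algebraMap ℂ (Matrix (Fin n) (Fin n) ℂ)) μ - A.map Complex.ofReal).det = 0 := by
    by_contra h
    exact hμ ((Matrix.isUnit_iff_isUnit_det _).mpr (isUnit_iff_ne_zero.mpr h))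
  obtain ⟨v, hvne, hv⟩ := (Matrix.exists_mulVec_eq_zero_iff).mpr hdet
  have heigv : (A.map Complex.ofReal) *ᵥ v = μ • v := by
    have h1 : (algebraMap ℂ (Matrix (Fin n) (Fin n) ℂ)) μ *ᵥ v = μ • v := by
      rw [Algebra.algebraMap_eq_smul_one, Matrix.smul_mulVec, Matrix.one_mulVec]
    have := hv
    rw [Matrix.sub_mulVec, sub_eq_zero] at this
    rw [← this, h1]
  set w : Fin n → ℝ := fun i => ‖v i‖ with hw
  have hw0 : ∀ i, 0 ≤ w i := fun i => (norm_nonneg _)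
  have hAw : ∀ i, ‖μ‖ * w i ≤ (A *ᵥ w) i := by
    intro i
    have h1 : ‖μ‖ * w i = ‖((A.map Complex.ofReal) *ᵥ v) i‖ := by
      rw [heigv]
      simp [hw, norm_mul]
    rw [h1]
    have h2 : ((A.map Complex.ofReal) *ᵥ v) i = ∑ j, (A i j : ℂ) * v j := by
      simp [Matrix.mulVec, dotProduct, Matrix.map_apply]
    rw [h2]
    calc ‖∑ j, (A i j : ℂ) * v j‖ ≤ ∑ j, ‖(A i j : ℂ) * v j‖ :=
          norm_sum_le _ _
      _ = ∑ j, A i j * w j := by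
          refine Finset.sum_congr rfl fun j _ => ?_
          rw [norm_mul, Complex.norm_real, Real.norm_eq_abs, abs_of_nonneg (hA i j)]
      _ = (A *ᵥ w) i := by simp [Matrix.mulVec, dotProduct]
  have huw : 0 < u ⬝ᵥ w := by
    obtain ⟨j, hj⟩ : ∃ j, v j ≠ 0 := Function.ne_iff.mp hvne
    exact Finset.sum_pos' (fun i _ => mul_nonneg (hu i).le (hw0 i))
      ⟨j, Finset.mem_univ j, mul_pos (hu j) (norm_pos_iff.mpr hj)⟩
  have hsum : ‖μ‖ * (u ⬝ᵥ w) ≤ lam * (u ⬝ᵥ w) := by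
    have h1 : ∑ i, u i * (‖μ‖ * w i) ≤ ∑ i, u i * (A *ᵥ w) i :=
      Finset.sum_le_sum fun i _ => mul_le_mul_of_nonneg_left (hAw i) (hu i).le
    have h2 : ∑ i, u i * (‖μ‖ * w i) = ‖μ‖ * (u ⬝ᵥ w) := by
      simp only [dotProduct, Finset.mul_sum]
      exact Finset.sum_congr rfl fun i _ => by ring
    have h3 : ∑ i, u i * (A *ᵥ w) i = lam * (u ⬝ᵥ w) := by
      have : (∑ i, u i * (A *ᵥ w) i) = u ⬝ᵥ (A *ᵥ w) := by simp [dotProduct]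
      have hvm : u ᵥ* A = lam • u := by
        rw [← Matrix.transpose_transpose A, Matrix.vecMul_transpose, heig]
      rw [this, Matrix.dotProduct_mulVec, hvm, smul_dotProduct, smul_eq_mul]
    rw [← h2, ← h3]
    exact h1
  exact le_of_mul_le_mul_right hsum huw

lemma lam_mem (hn : 0 < n) (A : Matrix (Fin n) (Fin n) ℝ) (lam : ℝ) (u : Fin n → ℝ)
    (hlam0 : 0 ≤ lam) (hu : ∀ i, 0 < u i) (heig : Aᵀ *ᵥ u = lam • u) :
    (lam : ℂ) ∈ spectrum ℂ (A.map Complex.ofReal) := by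
  have hune : u ≠ 0 := fun h => (hu ⟨0, hn⟩).ne' (congrFun h ⟨0, hn⟩)
  have h1 : (lam • 1 - Aᵀ) *ᵥ u = 0 := by
    rw [Matrix.sub_mulVec, Matrix.smul_mulVec, Matrix.one_mulVec, heig, sub_self]
  have hdetT : (lam • (1 : Matrix (Fin n) (Fin n) ℝ) - Aᵀ).det = 0 :=
    (Matrix.exists_mulVec_eq_zero_iff).mp ⟨u, hune, h1⟩
  have hdetR : (lam • (1 : Matrix (Fin n) (Fin n) ℝ) - A).det = 0 := by
    rw [← Matrix.det_transpose]
    rw [Matrix.transpose_sub, Matrix.transpose_smul, Matrix.transpose_one]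
    exact hdetT
  have hmap : ((lam • (1 : Matrix (Fin n) (Fin n) ℝ) - A).map Complex.ofReal)
      = (lam : ℂ) • (1 : Matrix (Fin n) (Fin n) ℂ) - A.map Complex.ofReal := by
    ext i j
    simp [Matrix.map_apply, Matrix.one_apply, apply_ite]
  have hdetC : ((lam : ℂ) • (1 : Matrix (Fin n) (Fin n) ℂ) - A.map Complex.ofReal).det = 0 := by
    rw [← hmap]
    have := RingHom.map_det Complex.ofRealHom (lam • (1 : Matrix (Fin n) (Fin n) ℝ) - A)
    rw [hdetR] at this
    exact this.symm.trans (map_zero _)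
  rw [spectrum.mem_iff, Algebra.algebraMap_eq_smul_one]
  intro hunit
  rw [Matrix.isUnit_iff_isUnit_det, hdetC] at hunit
  exact (isUnit_iff_ne_zero.mp hunit) rfl

lemma specRad_eq (hn : 0 < n) (A : Matrix (Fin n) (Fin n) ℝ) (lam : ℝ) (u : Fin n → ℝ)
    (hA : ∀ i j, 0 ≤ A i j) (hlam0 : 0 ≤ lam) (hu : ∀ i, 0 < u i)
    (heig : Aᵀ *ᵥ u = lam • u) : sSup ((fun z : ℂ => ‖z‖) '' spectrum ℂ (A.map Complex.ofReal)) = lam := by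
  have hmem : lam ∈ (fun z : ℂ => ‖z‖) '' spectrum ℂ (A.map Complex.ofReal) :=
    ⟨(lam : ℂ), lam_mem hn A lam u hlam0 hu heig, by
      simp [abs_of_nonneg hlam0]⟩
  have hbd : ∀ c ∈ (fun z : ℂ => ‖z‖) '' spectrum ℂ (A.map Complex.ofReal), c ≤ lam := by
    rintro c ⟨μ, hμ, rfl⟩
    exact abs_le_lam hn A lam u hA hu heig μ hμ
  exact le_antisymm (csSup_le ⟨lam, hmem⟩ hbd) (le_csSup ⟨lam, hbd⟩ hmem)


end PFaux

theorem stmt0 {n : ℕ} (A : Matrix (Fin n) (Fin n) ℝ)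
    (hA : ∀ i j, 0 ≤ A i j) (hirr : MatIrreducible A)
    (f : Polynomial ℝ) (y : Fin n → ℝ) (hy : y ≠ 0) (hy0 : ∀ i, 0 ≤ y i)
    (r : ℝ) (hle : ∀ i, ((Polynomial.aeval A) f).mulVec y i ≤ r * y i) :
    f.eval (matSpecRad A) ≤ r ∧
    (f.eval (matSpecRad A) = r ↔ ∀ i, ((Polynomial.aeval A) f).mulVec y i = r * y i) ∧
    ((∃ i, ((Polynomial.aeval A) f).mulVec y i < r * y i) → f.eval (matSpecRad A) < r) := by
  classical
  rcases Nat.eq_zero_or_pos n with hn | hn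
  · subst hn
    exact absurd (Subsingleton.elim y 0) hy
  -- Perron eigenpair of Aᵀ
  obtain ⟨lam, u, hlam0, hu, heig⟩ := perron_exists hn Aᵀ
    (fun i j => hA j i)
    (fun i j => by
      obtain ⟨k, hk⟩ := hirr j i
      exact ⟨k, by rwa [← Matrix.transpose_pow, Matrix.transpose_apply]⟩)
  have hspec : matSpecRad A = lam := by
    rw [show matSpecRad A = sSup ((fun z : ℂ => ‖z‖) '' spectrum ℂ (A.map Complex.ofReal)) from rfl]
    exact specRad_eq hn A lam u hA hlam0 hu heig
  rw [hspec]
  set F : Matrix (Fin n) (Fin n) ℝ := Polynomial.aeval A f with hF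
  have hvm : u ᵥ* F = f.eval lam • u := by
    rw [← Matrix.transpose_transpose F, Matrix.vecMul_transpose, hF, aeval_transpose,
      eig_aeval Aᵀ u lam heig]
  have hdot : u ⬝ᵥ (F *ᵥ y) = f.eval lam * (u ⬝ᵥ y) := by
    rw [Matrix.dotProduct_mulVec, hvm, smul_dotProduct, smul_eq_mul]
  have huy : 0 < u ⬝ᵥ y := by
    obtain ⟨j, hj⟩ : ∃ j, y j ≠ 0 := Function.ne_iff.mp hy
    exact Finset.sum_pos' (fun i _ => mul_nonneg (hu i).le (hy0 i))
      ⟨j, Finset.mem_univ j, mul_pos (hu j) (lt_of_le_of_ne (hy0 j) (Ne.symm hj))⟩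
  set d : Fin n → ℝ := fun i => r * y i - (F *ᵥ y) i with hd
  have hd0 : ∀ i, 0 ≤ d i := fun i => sub_nonneg.mpr (hle i)
  have hS : ∑ i, u i * d i = (r - f.eval lam) * (u ⬝ᵥ y) := by
    have h1 : ∑ i, u i * d i = (∑ i, u i * (r * y i)) - ∑ i, u i * (F *ᵥ y) i := by
      rw [← Finset.sum_sub_distrib]
      exact Finset.sum_congr rfl fun i _ => by rw [hd]; ring
    have h2 : ∑ i, u i * (r * y i) = r * (u ⬝ᵥ y) := by
      simp only [dotProduct, Finset.mul_sum]
      exact Finset.sum_congr rfl fun i _ => by ring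
    have h3 : ∑ i, u i * (F *ᵥ y) i = f.eval lam * (u ⬝ᵥ y) := by
      have : (∑ i, u i * (F *ᵥ y) i) = u ⬝ᵥ (F *ᵥ y) := by simp [dotProduct]
      rw [this, hdot]
    rw [h1, h2, h3]; ring
  have hSnn : 0 ≤ ∑ i, u i * d i :=
    Finset.sum_nonneg fun i _ => mul_nonneg (hu i).le (hd0 i)
  have hle' : f.eval lam ≤ r := by nlinarith [hS, hSnn, huy]
  refine ⟨hle', ⟨?_, ?_⟩, ?_⟩
  · intro heq
    intro i
    have hSz : ∑ i, u i * d i = 0 := by rw [hS, heq]; ring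
    have := (Finset.sum_eq_zero_iff_of_nonneg
      (fun i _ => mul_nonneg (hu i).le (hd0 i))).mp hSz i (Finset.mem_univ i)
    have hdz : d i = 0 := by
      rcases mul_eq_zero.mp this with h | h
      · exact absurd h (hu i).ne'
      · exact h
    have : r * y i - (F *ᵥ y) i = 0 := hdz
    linarith
  · intro hall
    have hSz : ∑ i, u i * d i = 0 :=
      Finset.sum_eq_zero fun i _ => by
        have : d i = 0 := by rw [hd]; simp only; rw [hall i]; ring
        rw [this, mul_zero]
    rw [hSz] at hS
    have : r - f.eval lam = 0 := by
      rcases mul_eq_zero.mp hS.symm with h | h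
      · exact h
      · exact absurd h huy.ne'
    linarith
  · rintro ⟨i, hi⟩
    have hSpos : 0 < ∑ i, u i * d i :=
      Finset.sum_pos' (fun i _ => mul_nonneg (hu i).le (hd0 i))
        ⟨i, Finset.mem_univ i, mul_pos (hu i) (sub_pos.mpr hi)⟩
    nlinarith [hS, hSpos, huy]
end

section
/- Let A be an irreducible nonnegative real n×n matrix with spectral radius ρ, let f be a real polynomial, and let y be a nonzero nonnegative vector. If f(A)y ≥ ry entrywise for some real r, then f(ρ) ≥ r, with equality if and only if f(A)y = ry. -/
open SimpleGraph

open Matrix Finset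

section PerronHelpers

variable {n : ℕ}

lemma powEntry_nonneg (A : Matrix (Fin n) (Fin n) ℝ) (hA : ∀ i j, 0 ≤ A i j) :
    ∀ k i j, 0 ≤ (A ^ k) i j := by
  intro k
  induction k with
  | zero => intro i j; by_cases h : i = j <;> simp [Matrix.one_apply, h]
  | succ k ih =>
      intro i j
      rw [pow_succ, Matrix.mul_apply]
      exact Finset.sum_nonneg fun l _ => mul_nonneg (ih i l) (hA l j)

lemma exists_posMat (A : Matrix (Fin n) (Fin n) ℝ) (hA : ∀ i j, 0 ≤ A i j)
    (hirr : MatIrreducible A) :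
    ∃ B : Matrix (Fin n) (Fin n) ℝ, (∀ i j, 0 < B i j) ∧ A * B = B * A := by
  classical
  choose K hK using hirr
  set m := Finset.univ.sup (fun p : Fin n × Fin n => K p.1 p.2) with hm
  refine ⟨∑ k ∈ Finset.range (m + 1), A ^ k, ?_, ?_⟩
  · intro i j
    have hKm : K i j ∈ Finset.range (m + 1) := by
      rw [Finset.mem_range, Nat.lt_succ_iff, hm]
      exact Finset.le_sup (f := fun p : Fin n × Fin n => K p.1 p.2) (Finset.mem_univ (i, j))
    have h1 : (A ^ (K i j)) i j ≤ (∑ k ∈ Finset.range (m + 1), A ^ k) i j := by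
      rw [Matrix.sum_apply]
      exact Finset.single_le_sum (fun k _ => powEntry_nonneg A hA k i j) hKm
    exact lt_of_lt_of_le (hK i j) h1
  · rw [Finset.mul_sum, Finset.sum_mul]
    exact Finset.sum_congr rfl fun k _ => (Commute.pow_right (Commute.refl A) k)

lemma inf'_continuousOn {X ι : Type*} [TopologicalSpace X] (s : Finset ι) (hs : s.Nonempty)
    {S : Set X} (g : ι → X → ℝ) (hg : ∀ i, ContinuousOn (g i) S) :
    ContinuousOn (fun x => s.inf' hs fun i => g i x) S := by
  induction hs using Finset.Nonempty.cons_induction with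
  | singleton a => simpa using hg a
  | cons a t ha ht ih =>
      have he : (fun x => (Finset.cons a t ha).inf' (Finset.cons_nonempty ha) fun i => g i x)
          = fun x => min (g a x) (t.inf' ht fun i => g i x) := by
        funext x; rw [Finset.inf'_cons]
      rw [he]
      exact (hg a).inf ih

lemma mulVec_pos_of_pos (B : Matrix (Fin n) (Fin n) ℝ) (hB : ∀ i j, 0 < B i j)
    (z : Fin n → ℝ) (hz : ∀ i, 0 ≤ z i) (hzne : z ≠ 0) : ∀ i, 0 < B.mulVec z i := by
  intro i
  obtain ⟨j, hj⟩ : ∃ j, 0 < z j := by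
    by_contra h
    push_neg at h
    exact hzne (funext fun j => le_antisymm (h j) (hz j))
  have : (0:ℝ) < B i j * z j := mul_pos (hB i j) hj
  calc (0:ℝ) < B i j * z j := this
    _ ≤ ∑ l, B i l * z l :=
        Finset.single_le_sum (fun l _ => mul_nonneg (hB i l).le (hz l)) (Finset.mem_univ j)
    _ = B.mulVec z i := rfl

lemma perron (hn : 0 < n) (M : Matrix (Fin n) (Fin n) ℝ)
    (hM : ∀ i j, 0 ≤ M i j) (hirr : MatIrreducible M) :
    ∃ (c : ℝ) (w : Fin n → ℝ), (∀ i, 0 < w i) ∧ M.mulVec w = c • w := by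
  classical
  haveI : Nonempty (Fin n) := ⟨⟨0, hn⟩⟩
  obtain ⟨B, hBpos, hcomm⟩ := exists_posMat M hM hirr
  set S : Set (Fin n → ℝ) := {x | (∀ i, 0 ≤ x i) ∧ ∑ i, x i = 1} with hS
  have hSsub : S ⊆ Set.pi Set.univ (fun _ => Set.Icc (0:ℝ) 1) := by
    rintro x ⟨h0, h1⟩ i _
    refine ⟨h0 i, ?_⟩
    calc x i ≤ ∑ j, x j := Finset.single_le_sum (fun j _ => h0 j) (Finset.mem_univ i)
      _ = 1 := h1
  have hSclosed : IsClosed S := by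
    have h1 : IsClosed {x : Fin n → ℝ | ∀ i, 0 ≤ x i} := by
      have : {x : Fin n → ℝ | ∀ i, 0 ≤ x i} = ⋂ i, {x | 0 ≤ x i} := by
        ext x; simp
      rw [this]
      exact isClosed_iInter fun i => isClosed_le continuous_const (continuous_apply i)
    have h2 : IsClosed {x : Fin n → ℝ | ∑ i, x i = 1} :=
      isClosed_eq (continuous_finset_sum _ fun i _ => continuous_apply i) continuous_const
    exact h1.inter h2
  have hScompact : IsCompact S :=
    (isCompact_univ_pi fun _ => isCompact_Icc).of_isClosed_subset hSclosed hSsub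
  have hSne : S.Nonempty := by
    refine ⟨fun _ => (n : ℝ)⁻¹, fun i => by positivity, ?_⟩
    simp [Finset.card_univ]
    field_simp
  -- points of S are nonzero
  have hSnz : ∀ x ∈ S, x ≠ 0 := by
    rintro x ⟨h0, h1⟩ rfl
    simp at h1
  have hBx : ∀ x ∈ S, ∀ i, 0 < B.mulVec x i := fun x hx =>
    mulVec_pos_of_pos B hBpos x hx.1 (hSnz x hx)
  -- the Collatz-Wielandt function
  set F : (Fin n → ℝ) → ℝ := fun x => Finset.univ.inf' Finset.univ_nonempty
      (fun i => M.mulVec (B.mulVec x) i / B.mulVec x i) with hF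
  have hmvcont : ∀ (C : Matrix (Fin n) (Fin n) ℝ) (i : Fin n),
      Continuous fun x : Fin n → ℝ => C.mulVec x i := by
    intro C i
    have : (fun x : Fin n → ℝ => C.mulVec x i) = fun x => ∑ j, C i j * x j := rfl
    rw [this]
    exact continuous_finset_sum _ fun j _ => continuous_const.mul (continuous_apply j)
  have hFcont : ContinuousOn F S := by
    apply inf'_continuousOn
    intro i
    have hrw : (fun x : Fin n → ℝ => M.mulVec (B.mulVec x) i)
        = fun x => (M * B).mulVec x i := by
      funext x; rw [Matrix.mulVec_mulVec]
    exact ContinuousOn.div (by rw [hrw]; exact (hmvcont (M * B) i).continuousOn)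
      ((hmvcont B i).continuousOn) (fun x hx => (hBx x hx i).ne')
  obtain ⟨x₀, hx₀S, hmax⟩ := hScompact.exists_isMaxOn hSne hFcont
  set w := B.mulVec x₀ with hw
  have hwpos : ∀ i, 0 < w i := hBx x₀ hx₀S
  set c := F x₀ with hc
  have hkey : ∀ i, c * w i ≤ M.mulVec w i := by
    intro i
    have h1 : c ≤ M.mulVec w i / w i :=
      Finset.inf'_le _ (Finset.mem_univ i)
    exact (le_div_iff₀ (hwpos i)).mp h1
  refine ⟨c, w, hwpos, ?_⟩
  by_contra heq
  set z := M.mulVec w - c • w with hz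
  have hz0 : ∀ i, 0 ≤ z i := fun i => sub_nonneg.mpr (hkey i)
  have hzne : z ≠ 0 := fun h => heq (by rw [← sub_eq_zero]; exact h)
  have hBzpos : ∀ i, 0 < B.mulVec z i := mulVec_pos_of_pos B hBpos z hz0 hzne
  -- B z = M (B w) - c (B w)
  set w₁ := B.mulVec w with hw₁
  have hw₁pos : ∀ i, 0 < w₁ i :=
    mulVec_pos_of_pos B hBpos w (fun i => (hwpos i).le) (fun h => by
      have := hwpos ⟨0, hn⟩; rw [h] at this; simp at this)
  have hstrict : ∀ i, c * w₁ i < M.mulVec w₁ i := by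
    intro i
    have h1 : B.mulVec z = M.mulVec w₁ - c • w₁ := by
      rw [hz, hw₁]
      rw [Matrix.mulVec_sub, Matrix.mulVec_smul, Matrix.mulVec_mulVec, ← hcomm,
        ← Matrix.mulVec_mulVec]
    have := hBzpos i
    rw [h1] at this
    have h2 : (M.mulVec w₁ - c • w₁) i = M.mulVec w₁ i - c * w₁ i := rfl
    rw [h2] at this
    linarith
  -- normalize w to get a contradiction with maximality
  set s := ∑ i, w i with hs
  have hspos : 0 < s := Finset.sum_pos (fun i _ => hwpos i) Finset.univ_nonempty
  set x₁ := s⁻¹ • w with hx₁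
  have hx₁S : x₁ ∈ S := by
    constructor
    · intro i; exact mul_nonneg (inv_nonneg.mpr hspos.le) (hwpos i).le
    · rw [hx₁]
      simp only [Pi.smul_apply, smul_eq_mul, ← Finset.mul_sum]
      rw [← hs, inv_mul_cancel₀ hspos.ne']
  have hFx₁ : c < F x₁ := by
    rw [hF]
    rw [Finset.lt_inf'_iff]
    intro i _
    have hB1 : B.mulVec x₁ = s⁻¹ • w₁ := by rw [hx₁, Matrix.mulVec_smul, hw₁]
    rw [hB1, Matrix.mulVec_smul]
    have h3 : (s⁻¹ • M.mulVec w₁) i / (s⁻¹ • w₁) i = M.mulVec w₁ i / w₁ i := by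
      simp only [Pi.smul_apply, smul_eq_mul]
      rw [mul_div_mul_left _ _ (inv_ne_zero hspos.ne')]
    rw [h3]
    exact (lt_div_iff₀ (hw₁pos i)).mpr (hstrict i)
  exact absurd (hmax hx₁S) (not_le.mpr hFx₁)

lemma spectrum_exists_eigvec (Mc : Matrix (Fin n) (Fin n) ℂ) (μ : ℂ)
    (h : μ ∈ spectrum ℂ Mc) : ∃ v : Fin n → ℂ, v ≠ 0 ∧ Mc.mulVec v = μ • v := by
  have h1 : μ ∈ spectrum ℂ (Matrix.toLinAlgEquiv' Mc) := by
    rwa [AlgEquiv.spectrum_eq]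
  have h2 : Module.End.HasEigenvalue (Matrix.toLinAlgEquiv' Mc) μ :=
    Module.End.hasEigenvalue_iff_mem_spectrum.mpr h1
  obtain ⟨v, hv⟩ := h2.exists_hasEigenvector
  refine ⟨v, hv.2, ?_⟩
  have := hv.apply_eq_smul
  simpa using this

lemma real_eig_mem_spectrum (A : Matrix (Fin n) (Fin n) ℝ) (c : ℝ) (x : Fin n → ℝ)
    (hx : x ≠ 0) (he : Aᵀ.mulVec x = c • x) :
    (c : ℂ) ∈ spectrum ℂ (A.map Complex.ofReal) := by
  -- c is in the real spectrum of Aᵀ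
  have h1 : c ∈ spectrum ℝ Aᵀ := by
    rw [← AlgEquiv.spectrum_eq Matrix.toLinAlgEquiv']
    rw [← Module.End.hasEigenvalue_iff_mem_spectrum]
    apply Module.End.hasEigenvalue_of_hasEigenvector (x := x)
    refine ⟨Module.End.mem_eigenspace_iff.mpr ?_, hx⟩
    simpa using he
  rw [spectrum.mem_iff] at h1 ⊢
  intro hu
  apply h1
  rw [Matrix.isUnit_iff_isUnit_det, isUnit_iff_ne_zero] at hu ⊢
  intro hdet
  apply hu
  have hmap : (algebraMap ℂ (Matrix (Fin n) (Fin n) ℂ)) (c:ℂ) - A.map Complex.ofReal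
      = ((algebraMap ℝ (Matrix (Fin n) (Fin n) ℝ) c - Aᵀ)ᵀ).map Complex.ofReal := by
    ext i j
    by_cases hij : i = j
    · simp [Matrix.map_apply, Matrix.algebraMap_matrix_apply, hij, Matrix.transpose_apply]
    · simp [Matrix.map_apply, Matrix.algebraMap_matrix_apply, hij, Matrix.transpose_apply,
        (show ¬ j = i from fun h => hij h.symm)]
  rw [hmap]
  have h5 : ((algebraMap ℝ (Matrix (Fin n) (Fin n) ℝ) c - Aᵀ)ᵀ).map Complex.ofReal
      = Complex.ofRealHom.mapMatrix ((algebraMap ℝ (Matrix (Fin n) (Fin n) ℝ) c - Aᵀ)ᵀ) := rfl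
  rw [h5, ← RingHom.map_det]
  rw [Matrix.det_transpose, hdet]
  simp

lemma left_perron (hn : 0 < n) (A : Matrix (Fin n) (Fin n) ℝ)
    (hA : ∀ i j, 0 ≤ A i j) (hirr : MatIrreducible A) :
    ∃ x : Fin n → ℝ, (∀ i, 0 < x i) ∧ Aᵀ.mulVec x = matSpecRad A • x := by
  classical
  haveI : Nonempty (Fin n) := ⟨⟨0, hn⟩⟩
  have hAT : ∀ i j, 0 ≤ Aᵀ i j := fun i j => hA j i
  have hirrT : MatIrreducible Aᵀ := by
    intro i j
    obtain ⟨k, hk⟩ := hirr j i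
    exact ⟨k, by rw [← Matrix.transpose_pow]; exact hk⟩
  obtain ⟨c, x, hxpos, hxe⟩ := perron hn Aᵀ hAT hirrT
  have hxne : x ≠ 0 := fun h => by
    have := hxpos ⟨0, hn⟩; rw [h] at this; simp at this
  -- c is nonnegative
  have hc0 : 0 ≤ c := by
    have h1 : (∑ j, Aᵀ ⟨0, hn⟩ j * x j) = c * x ⟨0, hn⟩ := congrFun hxe ⟨0, hn⟩
    have h2 : 0 ≤ ∑ j, Aᵀ ⟨0, hn⟩ j * x j :=
      Finset.sum_nonneg fun j _ => mul_nonneg (hAT _ j) (hxpos j).le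
    rw [h1] at h2
    nlinarith [hxpos ⟨0, hn⟩]
  -- upper bound: every complex eigenvalue has modulus at most c
  have hub : ∀ μ ∈ spectrum ℂ (A.map Complex.ofReal), ‖μ‖ ≤ c := by
    intro μ hμ
    obtain ⟨v, hvne, hve⟩ := spectrum_exists_eigvec (A.map Complex.ofReal) μ hμ
    set u : Fin n → ℝ := fun i => ‖v i‖ with hu
    have hu0 : ∀ i, 0 ≤ u i := fun i => norm_nonneg _
    have h1 : ∀ i, ‖μ‖ * u i ≤ A.mulVec u i := by
      intro i
      have h2 : μ * v i = ∑ j, (A i j : ℂ) * v j := by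
        have := congrFun hve i
        simp only [Matrix.mulVec, dotProduct, Pi.smul_apply, smul_eq_mul] at this
        rw [← this]
        rfl
      calc ‖μ‖ * u i = ‖μ * v i‖ := by rw [norm_mul]
        _ = ‖∑ j, (A i j : ℂ) * v j‖ := by rw [h2]
        _ ≤ ∑ j, ‖(A i j : ℂ) * v j‖ := norm_sum_le _ _
        _ = ∑ j, A i j * u j := by
            refine Finset.sum_congr rfl fun j _ => ?_
            rw [norm_mul, Complex.norm_real, Real.norm_of_nonneg (hA i j)]
        _ = A.mulVec u i := rfl
    -- dot with x
    have hxu : 0 < x ⬝ᵥ u := by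
      obtain ⟨j, hj⟩ : ∃ j, v j ≠ 0 := Function.ne_iff.mp hvne
      refine Finset.sum_pos' (fun i _ => mul_nonneg (hxpos i).le (hu0 i)) ⟨j, Finset.mem_univ j, ?_⟩
      exact mul_pos (hxpos j) (norm_pos_iff.mpr hj)
    have h3 : ‖μ‖ * (x ⬝ᵥ u) ≤ c * (x ⬝ᵥ u) := by
      have h4 : x ⬝ᵥ A.mulVec u = c * (x ⬝ᵥ u) := by
        rw [Matrix.dotProduct_mulVec, ← Matrix.mulVec_transpose, hxe, smul_dotProduct]
        rfl
      calc ‖μ‖ * (x ⬝ᵥ u) = ∑ i, x i * (‖μ‖ * u i) := by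
            rw [dotProduct, Finset.mul_sum]
            exact Finset.sum_congr rfl fun i _ => by ring
        _ ≤ ∑ i, x i * A.mulVec u i :=
            Finset.sum_le_sum fun i _ => mul_le_mul_of_nonneg_left (h1 i) (hxpos i).le
        _ = x ⬝ᵥ A.mulVec u := rfl
        _ = c * (x ⬝ᵥ u) := h4
    exact le_of_mul_le_mul_right h3 hxu
  -- c is in the spectrum moduli set
  have hmem : c ∈ (fun z : ℂ => ‖z‖) '' spectrum ℂ (A.map Complex.ofReal) :=
    ⟨(c : ℂ), real_eig_mem_spectrum A c x hxne hxe, by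
      show ‖(c : ℂ)‖ = c
      rw [Complex.norm_real, Real.norm_of_nonneg hc0]⟩
  have hrad : matSpecRad A = c := by
    unfold matSpecRad
    apply le_antisymm
    · exact csSup_le ⟨c, hmem⟩ (by rintro t ⟨μ, hμ, rfl⟩; exact hub μ hμ)
    · exact le_csSup ⟨c, by rintro t ⟨μ, hμ, rfl⟩; exact hub μ hμ⟩ hmem
  exact ⟨x, hxpos, by rw [hrad]; exact hxe⟩

lemma vecMul_smulMat (a : ℝ) (M : Matrix (Fin n) (Fin n) ℝ) (x : Fin n → ℝ) :
    Matrix.vecMul x (a • M) = a • Matrix.vecMul x M := by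
  ext i
  simp only [Matrix.vecMul, dotProduct, Matrix.smul_apply, Pi.smul_apply,
    smul_eq_mul, Finset.mul_sum]
  exact Finset.sum_congr rfl fun j _ => by ring

end PerronHelpers

theorem stmt1 {n : ℕ} (A : Matrix (Fin n) (Fin n) ℝ)
    (hA : ∀ i j, 0 ≤ A i j) (hirr : MatIrreducible A)
    (f : Polynomial ℝ) (y : Fin n → ℝ) (hy : y ≠ 0) (hy0 : ∀ i, 0 ≤ y i)
    (r : ℝ) (hge : ∀ i, r * y i ≤ ((Polynomial.aeval A) f).mulVec y i) :
    r ≤ f.eval (matSpecRad A) ∧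
    (f.eval (matSpecRad A) = r ↔ ∀ i, ((Polynomial.aeval A) f).mulVec y i = r * y i) := by
  classical
  rcases Nat.eq_zero_or_pos n with hn0 | hn
  · subst hn0
    exact absurd (funext fun i => absurd i.isLt (by omega)) hy
  obtain ⟨x, hxpos, hxe⟩ := left_perron hn A hA hirr
  set ρ := matSpecRad A with hρ
  set P := (Polynomial.aeval A) f with hP
  have hvm : ∀ k : ℕ, Matrix.vecMul x (A ^ k) = ρ ^ k • x := by
    intro k
    induction k with
    | zero => simp
    | succ k ih =>
        rw [pow_succ, ← Matrix.vecMul_vecMul, ih, Matrix.smul_vecMul,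
          ← Matrix.mulVec_transpose, hxe, smul_smul, pow_succ]
  have haeval' : ∀ g : Polynomial ℝ,
      Matrix.vecMul x ((Polynomial.aeval A) g) = g.eval ρ • x := by
    intro g
    induction g using Polynomial.induction_on' with
    | add p q hp hq => rw [map_add, Matrix.vecMul_add, hp, hq, Polynomial.eval_add, add_smul]
    | monomial k a =>
        rw [Polynomial.aeval_monomial, Polynomial.eval_monomial,
          ← Matrix.vecMul_vecMul, Algebra.algebraMap_eq_smul_one, vecMul_smulMat,
          Matrix.vecMul_one, Matrix.smul_vecMul, hvm k, smul_smul]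
  have haeval : Matrix.vecMul x P = f.eval ρ • x := haeval' f
  have h1 : x ⬝ᵥ P.mulVec y = f.eval ρ * (x ⬝ᵥ y) := by
    rw [Matrix.dotProduct_mulVec, haeval, smul_dotProduct, smul_eq_mul]
  have hd : 0 < x ⬝ᵥ y := by
    obtain ⟨j, hj⟩ : ∃ j, y j ≠ 0 := Function.ne_iff.mp hy
    exact Finset.sum_pos' (fun i _ => mul_nonneg (hxpos i).le (hy0 i))
      ⟨j, Finset.mem_univ j, mul_pos (hxpos j) (lt_of_le_of_ne (hy0 j) (Ne.symm hj))⟩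
  have hrxy : r * (x ⬝ᵥ y) = ∑ i, x i * (r * y i) := by
    rw [dotProduct, Finset.mul_sum]
    exact Finset.sum_congr rfl fun i _ => by ring
  have h2 : r * (x ⬝ᵥ y) ≤ x ⬝ᵥ P.mulVec y := by
    rw [hrxy]
    exact Finset.sum_le_sum fun i _ => mul_le_mul_of_nonneg_left (hge i) (hxpos i).le
  have hler : r ≤ f.eval ρ := by
    rw [h1] at h2
    exact le_of_mul_le_mul_right h2 hd
  refine ⟨hler, fun heq => ?_, fun hall => ?_⟩
  · have hz : ∑ i, x i * (P.mulVec y i - r * y i) = 0 := by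
      have hsplit : ∑ i, x i * (P.mulVec y i - r * y i)
          = (x ⬝ᵥ P.mulVec y) - ∑ i, x i * (r * y i) := by
        rw [dotProduct, ← Finset.sum_sub_distrib]
        exact Finset.sum_congr rfl fun i _ => by ring
      rw [hsplit, ← hrxy, h1, heq]
      ring
    intro i
    have hterm := (Finset.sum_eq_zero_iff_of_nonneg
      (fun i _ => mul_nonneg (hxpos i).le (sub_nonneg.mpr (hge i)))).mp hz i (Finset.mem_univ i)
    rcases mul_eq_zero.mp hterm with h | h
    · exact absurd h (hxpos i).ne'
    · linarith [sub_eq_zero.mp h]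
  · have h3 : x ⬝ᵥ P.mulVec y = r * (x ⬝ᵥ y) := by
      rw [hrxy, dotProduct]
      exact Finset.sum_congr rfl fun i _ => by rw [hall i]
    rw [h1] at h3
    exact mul_right_cancel₀ hd.ne' h3
end

section
/- Let G be a maximal 2-connected bipartite outerplanar graph of order n ≥ 2. Then every vertex v of G has degree at most n/2. -/
open SimpleGraph

private lemma aux_singleton_connected {V : Type*} (G : SimpleGraph V) (a : V) :
    (G.induce {a}).Connected := by
  haveI : Nonempty ↥({a} : Set V) := ⟨⟨a, rfl⟩⟩
  refine ⟨fun x y => ?_⟩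
  have hx : x = y := Subtype.ext (x.property.trans y.property.symm)
  exact hx ▸ SimpleGraph.Reachable.refl x

private lemma aux_insert_connected {V : Type*} (G : SimpleGraph V) {C : Set V} {a b : V}
    (hC : (G.induce C).Connected) (hb : b ∈ C) (hab : G.Adj a b) :
    (G.induce (insert a C)).Connected := by
  have hsub : C ⊆ insert a C := Set.subset_insert a C
  let φ : G.induce C →g G.induce (insert a C) :=
    { toFun := fun x => ⟨x.val, hsub x.property⟩,
      map_rel' := fun h => h }
  have key : ∀ x : ↥(insert a C),
      (G.induce (insert a C)).Reachable x ⟨b, Set.mem_insert_of_mem a hb⟩ := by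
    rintro ⟨x, hx⟩
    rcases hx with rfl | hxC
    · have h2 : (G.induce (insert x C)).Adj ⟨x, Set.mem_insert x C⟩
          ⟨b, Set.mem_insert_of_mem x hb⟩ := hab
      exact h2.reachable
    · exact SimpleGraph.Reachable.map φ (hC.preconnected ⟨x, hxC⟩ ⟨b, hb⟩)
  haveI : Nonempty ↥(insert a C) := ⟨⟨b, Set.mem_insert_of_mem a hb⟩⟩
  exact ⟨fun x y => (key x).trans (key y).symm⟩

private lemma aux_walk_extract {α V : Type*} (H : SimpleGraph α) (G : SimpleGraph V) (F : α → V)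
    (hF : ∀ a b : α, H.Adj a b → G.Adj (F a) (F b))
    (N W : Set V) (hNW : ∀ z : α, F z ∈ N ∨ F z ∈ W)
    (hdisj : ∀ z, z ∈ N → z ∈ W → False) :
    ∀ {a b : α} (R : H.Walk a b), F a ∈ W → F b ∈ N →
      ∃ (C : Set V) (x : α), x ∈ R.support ∧ F x ∈ N ∧ C ⊆ W ∧ F a ∈ C ∧
        (G.induce C).Connected ∧ (∃ c ∈ C, G.Adj (F x) c) := by
  intro a b R
  induction R with
  | nil => intro ha hb; exact absurd hb (fun hb => hdisj _ hb ha)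
  | @cons a a' b h q ih =>
    intro ha hb
    rcases hNW a' with hN | hW
    · refine ⟨{F a}, a', ?_, hN, ?_, rfl, aux_singleton_connected G (F a),
        ⟨F a, rfl, (hF _ _ h).symm⟩⟩
      · rw [SimpleGraph.Walk.support_cons]
        exact List.mem_cons_of_mem _ q.start_mem_support
      · intro z hz
        rw [Set.mem_singleton_iff] at hz
        subst hz; exact ha
    · obtain ⟨C, x, hxsup, hxN, hCW, haC, hCconn, hadj⟩ := ih hW hb
      refine ⟨insert (F a) C, x, ?_, hxN, ?_, Set.mem_insert _ _,
        aux_insert_connected G hCconn haC (hF _ _ h), ?_⟩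
      · rw [SimpleGraph.Walk.support_cons]
        exact List.mem_cons_of_mem _ hxsup
      · intro z hz
        rcases hz with rfl | hz
        · exact ha
        · exact hCW hz
      · obtain ⟨c, hc, hc2⟩ := hadj
        exact ⟨c, Set.mem_insert_of_mem _ hc, hc2⟩

private lemma aux_k23_minor {V : Type*} (G : SimpleGraph V) (v x u₁ u₂ : V) (C : Set V)
    (hC : (G.induce C).Connected)
    (hvC : v ∉ C) (hxC : x ∉ C) (h1C : u₁ ∉ C) (h2C : u₂ ∉ C)
    (h12 : u₁ ≠ u₂) (hx1 : x ≠ u₁) (hx2 : x ≠ u₂)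
    (hv1 : G.Adj v u₁) (hv2 : G.Adj v u₂) (hvx : G.Adj v x)
    (e1 : ∃ c ∈ C, G.Adj u₁ c) (e2 : ∃ c ∈ C, G.Adj u₂ c) (ex : ∃ c ∈ C, G.Adj x c) :
    (completeBipartiteGraph (Fin 2) (Fin 3)).IsMinorOf G := by
  classical
  have hCne : C.Nonempty := by
    obtain ⟨c, hc, _⟩ := ex; exact ⟨c, hc⟩
  have hv1' : v ≠ u₁ := hv1.ne
  have hv2' : v ≠ u₂ := hv2.ne
  have hvx' : v ≠ x := hvx.ne
  have h1v : u₁ ≠ v := hv1.ne'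
  have h2v : u₂ ≠ v := hv2.ne'
  have hxv : x ≠ v := hvx.ne'
  have h21 : u₂ ≠ u₁ := fun h => h12 h.symm
  have h1x : u₁ ≠ x := fun h => hx1 h.symm
  have h2x : u₂ ≠ x := fun h => hx2 h.symm
  refine ⟨Sum.elim ![{v}, C] ![{u₁}, {u₂}, {x}], ?_, ?_, ?_, ?_⟩
  · rintro (i | j)
    · fin_cases i <;> simp [hCne]
    · fin_cases j <;> simp
  · intro b₁ b₂ hne
    rcases b₁ with i | j <;> rcases b₂ with i' | j' <;>
      [skip; skip; skip; skip] <;>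
      first
        | (fin_cases i <;> fin_cases i' <;>
            simp_all [Set.disjoint_singleton_left, Set.disjoint_singleton_right])
        | (fin_cases i <;> fin_cases j' <;>
            simp_all [Set.disjoint_singleton_left, Set.disjoint_singleton_right])
        | (fin_cases j <;> fin_cases i' <;>
            simp_all [Set.disjoint_singleton_left, Set.disjoint_singleton_right])
        | (fin_cases j <;> fin_cases j' <;>
            simp_all [Set.disjoint_singleton_left, Set.disjoint_singleton_right])
  · rintro (i | j)
    · fin_cases i
      · simpa using aux_singleton_connected G v
      · simpa using hC
    · fin_cases j
      · exact aux_singleton_connected G u₁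
      · exact aux_singleton_connected G u₂
      · exact aux_singleton_connected G x
  · intro b₁ b₂ hadj
    rcases b₁ with i | j <;> rcases b₂ with i' | j'
    · simp at hadj
    · fin_cases i <;> fin_cases j' <;> simp
      · exact hv1
      · exact hv2
      · exact hvx
      · obtain ⟨c, hc, h⟩ := e1; exact ⟨c, hc, h.symm⟩
      · obtain ⟨c, hc, h⟩ := e2; exact ⟨c, hc, h.symm⟩
      · obtain ⟨c, hc, h⟩ := ex; exact ⟨c, hc, h.symm⟩
    · fin_cases j <;> fin_cases i' <;> simp
      · exact hv1.symm
      · obtain ⟨c, hc, h⟩ := e1; exact ⟨c, hc, h⟩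
      · exact hv2.symm
      · obtain ⟨c, hc, h⟩ := e2; exact ⟨c, hc, h⟩
      · exact hvx.symm
      · obtain ⟨c, hc, h⟩ := ex; exact ⟨c, hc, h⟩
    · simp at hadj

theorem stmt12 {V : Type*} [Fintype V] [DecidableEq V]
    (G : SimpleGraph V) [DecidableRel G.Adj]
    (hn : 2 ≤ Fintype.card V) (hmax : G.MaxBipOuterplanar) (h2c : G.TwoConnected) :
    ∀ v : V, 2 * G.degree v ≤ Fintype.card V := by
  classical
  intro v
  by_cases hd0 : G.degree v = 0
  · simp [hd0]
  obtain ⟨c⟩ := hmax.2.1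
  have hK23 := hmax.1.2
  have hind : ∀ u u' : V, G.Adj v u → G.Adj v u' → ¬ G.Adj u u' := by
    intro u u' h1 h2 h3
    have a1 : (c v).val ≠ (c u).val := fun h => c.valid h1 (Fin.ext h)
    have a2 : (c v).val ≠ (c u').val := fun h => c.valid h2 (Fin.ext h)
    have a3 : (c u).val ≠ (c u').val := fun h => c.valid h3 (Fin.ext h)
    have b1 := (c v).isLt
    have b2 := (c u).isLt
    have b3 := (c u').isLt
    omega
  set S := ((⊤ : G.Subgraph).deleteVerts {v}).verts with hS
  set H := ((⊤ : G.Subgraph).deleteVerts {v}).coe with hHdef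
  have hHconn : H.Connected := h2c.2.2 v
  have hmemS : ∀ w : V, w ≠ v → w ∈ S := by
    intro w hw
    simp [hS, SimpleGraph.Subgraph.deleteVerts_verts, hw]
  have hneS : ∀ a : ↥S, a.val ≠ v := by
    rintro ⟨a, ha⟩
    simp only [hS, SimpleGraph.Subgraph.deleteVerts_verts, Set.mem_diff,
      Set.mem_singleton_iff] at ha
    exact ha.2
  have hadjH : ∀ a b : ↥S, H.Adj a b → G.Adj a.val b.val := by
    intro a b h
    exact ((⊤ : G.Subgraph).deleteVerts {v}).coe_adj_sub _ _ h
  have hdpos : 0 < G.degree v := Nat.pos_of_ne_zero hd0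
  obtain ⟨u₀, hu₀⟩ : (G.neighborFinset v).Nonempty := Finset.card_pos.mp hdpos
  have hvu₀ : G.Adj v u₀ := (SimpleGraph.mem_neighborFinset _ _ _).mp hu₀
  set q0 : ↥S := ⟨u₀, hmemS u₀ hvu₀.ne'⟩ with hq0
  have parent : ∀ u : V, G.Adj v u → u ≠ u₀ →
      ∃ w : V, ((w ≠ v ∧ ¬ G.Adj v w) ∧ G.Adj u w) ∧
        ∃ (hw : w ∈ S) (hu : u ∈ S), H.dist ⟨w, hw⟩ q0 + 1 = H.dist ⟨u, hu⟩ q0 := by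
    intro u hvu hne
    have huS : u ∈ S := hmemS u hvu.ne'
    obtain ⟨R, hR⟩ := hHconn.exists_walk_length_eq_dist ⟨u, huS⟩ q0
    have hnil : ¬ R.Nil := SimpleGraph.Walk.not_nil_of_ne
      (fun h => hne (congrArg Subtype.val h))
    set w' : ↥S := R.getVert 1 with hw'
    have hadj : H.Adj ⟨u, huS⟩ w' := R.adj_snd hnil
    have hlen : R.tail.length + 1 = R.length := SimpleGraph.Walk.length_tail_add_one hnil
    have hd1 : H.dist w' q0 ≤ R.tail.length := SimpleGraph.dist_le R.tail
    obtain ⟨Q, hQ⟩ := hHconn.exists_walk_length_eq_dist w' q0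
    have hd2 : H.dist ⟨u, huS⟩ q0 ≤ Q.length + 1 := by
      have := SimpleGraph.dist_le (SimpleGraph.Walk.cons hadj Q)
      simpa [SimpleGraph.Walk.length_cons] using this
    have hGuw : G.Adj u w'.val := hadjH _ _ hadj
    have hnadj : ¬ G.Adj v w'.val := fun hvw => hind u w'.val hvu hvw hGuw
    refine ⟨w'.val, ⟨⟨hneS w', hnadj⟩, hGuw⟩, w'.property, huS, ?_⟩
    have heq : (⟨w'.val, w'.property⟩ : ↥S) = w' := rfl
    rw [heq]
    omega
  let f : V → V := fun u =>
    if h : G.Adj v u ∧ u ≠ u₀ then (parent u h.1 h.2).choose else u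
  have hfspec : ∀ u : V, G.Adj v u → u ≠ u₀ →
      ((f u ≠ v ∧ ¬ G.Adj v (f u)) ∧ G.Adj u (f u)) ∧
        ∃ (hw : f u ∈ S) (hu : u ∈ S),
          H.dist ⟨f u, hw⟩ q0 + 1 = H.dist ⟨u, hu⟩ q0 := by
    intro u h1 h2
    have hfu : f u = (parent u h1 h2).choose := dif_pos ⟨h1, h2⟩
    rw [hfu]
    exact (parent u h1 h2).choose_spec
  have hmaps : ∀ u ∈ (G.neighborFinset v).erase u₀,
      f u ∈ Finset.univ \ insert v (G.neighborFinset v) := by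
    intro u hu
    obtain ⟨hne, hmem⟩ := Finset.mem_erase.mp hu
    have hvu := (SimpleGraph.mem_neighborFinset _ _ _).mp hmem
    obtain ⟨⟨⟨hwv, hwn⟩, _⟩, _⟩ := hfspec u hvu hne
    simp [Finset.mem_sdiff, SimpleGraph.mem_neighborFinset, hwv, hwn]
  have hinj : Set.InjOn f ((G.neighborFinset v).erase u₀ : Finset V) := by
    intro u₁ hu₁ u₂ hu₂ heq
    by_contra hne12
    simp only [Finset.coe_erase, Set.mem_diff, Finset.mem_coe,
      Set.mem_singleton_iff] at hu₁ hu₂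
    have hvu₁ : G.Adj v u₁ := (SimpleGraph.mem_neighborFinset _ _ _).mp hu₁.1
    have hvu₂ : G.Adj v u₂ := (SimpleGraph.mem_neighborFinset _ _ _).mp hu₂.1
    obtain ⟨⟨⟨hwv, hwn⟩, hu₁w⟩, hwS, hu₁S, hdist₁⟩ := hfspec u₁ hvu₁ hu₁.2
    obtain ⟨⟨_, hu₂w'⟩, hwS', hu₂S, hdist₂⟩ := hfspec u₂ hvu₂ hu₂.2
    rw [← heq] at hu₂w'
    have hcast : (⟨f u₂, hwS'⟩ : ↥S) = ⟨f u₁, hwS⟩ := Subtype.ext heq.symm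
    rw [hcast] at hdist₂
    set w : V := f u₁ with hwdef
    set wc : ↥S := ⟨w, hwS⟩ with hwc
    obtain ⟨R, hR⟩ := hHconn.exists_walk_length_eq_dist wc q0
    obtain ⟨C, xx, hxsup, hxN, hCW, hwC, hCconn, cx, hcx, hxadj⟩ :=
      aux_walk_extract H G Subtype.val hadjH
        {z | G.Adj v z} {z | z ≠ v ∧ ¬ G.Adj v z}
        (fun z => by
          by_cases h : G.Adj v z.val
          · exact Or.inl h
          · exact Or.inr ⟨hneS z, h⟩)
        (fun z hN hW => hW.2 hN)
        R ⟨hwv, hwn⟩ hvu₀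
    have hdx : H.dist xx q0 ≤ R.length := by
      have h1 := SimpleGraph.dist_le (R.dropUntil xx hxsup)
      have h2 := SimpleGraph.Walk.length_dropUntil_le R hxsup
      omega
    rw [hR] at hdx
    have hx1 : xx.val ≠ u₁ := by
      intro h
      have : xx = (⟨u₁, hu₁S⟩ : ↥S) := Subtype.ext h
      rw [this] at hdx
      omega
    have hx2 : xx.val ≠ u₂ := by
      intro h
      have : xx = (⟨u₂, hu₂S⟩ : ↥S) := Subtype.ext h
      rw [this] at hdx
      omega
    exact hK23 (aux_k23_minor G v xx.val u₁ u₂ C hCconn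
      (fun h => (hCW h).1 rfl) (fun h => (hCW h).2 hxN)
      (fun h => (hCW h).2 hvu₁) (fun h => (hCW h).2 hvu₂)
      hne12 hx1 hx2 hvu₁ hvu₂ hxN
      ⟨w, hwC, hu₁w⟩ ⟨w, hwC, hu₂w'⟩ ⟨cx, hcx, hxadj⟩)
  have hcard := Finset.card_le_card_of_injOn f hmaps hinj
  rw [Finset.card_erase_of_mem hu₀] at hcard
  have h0 : (G.neighborFinset v).card = G.degree v := rfl
  have h2 : (insert v (G.neighborFinset v)).card = G.degree v + 1 := by
    rw [Finset.card_insert_of_notMem (by simp [SimpleGraph.mem_neighborFinset])]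
    rfl
  have h1 : (Finset.univ \ insert v (G.neighborFinset v)).card
      = Fintype.card V - (G.degree v + 1) := by
    rw [Finset.card_sdiff_of_subset (Finset.subset_univ _), h2, Finset.card_univ]
  have h3 : (insert v (G.neighborFinset v)).card ≤ Fintype.card V :=
    Finset.card_le_univ _
  rw [h1, h0] at hcard
  rw [h2] at h3
  omega
end
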